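/- Let G be a group and H a subgroup of G of finite index N = [G : H], and let G_1, …, G_k be subgroups of G each containing H. Then μ(D({[G_i : H] : 1 ≤ i ≤ k})) equals the number of integers n with 0 ≤ n < N such that [G : G_i] divides n for some i ∈ {1, …, k}. -/

import Mathlib

theorem mu_D_relindex_eq_card {G : Type*} [Group G] (H : Subgroup G)
    (hH : H.index ≠ 0) (k : ℕ) (Gs : Fin k → Subgroup G) (hle : ∀ i, H ≤ Gs i) :
    ∑ m ∈ (Finset.univ.image fun i : Fin k => H.relIndex (Gs i)).biUnion Nat.divisors,
        Nat.totient m =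
      Nat.card {n : ℕ // n < H.index ∧ ∃ i, (Gs i).index ∣ n} := by
  classical
  set N := H.index with hN
  set r : Fin k → ℕ := fun i => H.relIndex (Gs i) with hr
  set d : Fin k → ℕ := fun i => (Gs i).index with hd
  have hmul : ∀ i, r i * d i = N := fun i => Subgroup.relIndex_mul_index (hle i)
  have hNpos : 0 < N := Nat.pos_of_ne_zero hH
  have hrne : ∀ i, r i ≠ 0 := by
    intro i h
    apply hH; rw [← hmul i, h, zero_mul]
  have hdne : ∀ i, d i ≠ 0 := by
    intro i h
    apply hH; rw [← hmul i, h, mul_zero]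
  have hrdvd : ∀ i, r i ∣ N := fun i => ⟨d i, (hmul i).symm⟩
  set S := (Finset.univ.image fun i : Fin k => r i).biUnion Nat.divisors with hS
  have hSdvd : ∀ m ∈ S, m ∣ N := by
    intro m hm
    simp only [hS, Finset.mem_biUnion, Finset.mem_image, Finset.mem_univ, true_and] at hm
    obtain ⟨x, ⟨i, rfl⟩, hx⟩ := hm
    exact (Nat.mem_divisors.mp hx).1.trans (hrdvd i)
  -- rewrite RHS as a Finset card
  have hcard : Nat.card {n : ℕ // n < N ∧ ∃ i, d i ∣ n} =
      ((Finset.range N).filter (fun n => ∃ i, d i ∣ n)).card := by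
    have e : {n : ℕ // n < N ∧ ∃ i, d i ∣ n} ≃
        {n : ℕ // n ∈ (Finset.range N).filter (fun n => ∃ i, d i ∣ n)} :=
      Equiv.subtypeEquivRight (fun n => by
        simp only [Finset.mem_filter, Finset.mem_range])
    rw [Nat.card_congr e, Nat.card_eq_finsetCard]
  rw [hcard]
  -- key: the filtered set is the disjoint union over m ∈ S of gcd-fibers
  have hset : (Finset.range N).filter (fun n => ∃ i, d i ∣ n) =
      S.biUnion (fun m => (Finset.range N).filter (fun n => Nat.gcd N n = N / m)) := by
    ext n
    simp only [Finset.mem_filter, Finset.mem_range, Finset.mem_biUnion]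
    constructor
    · rintro ⟨hn, i, hdvd⟩
      refine ⟨N / Nat.gcd N n, ?_, hn, ?_⟩
      · have hg : Nat.gcd N n ∣ N := Nat.gcd_dvd_left N n
        have hdg : d i ∣ Nat.gcd N n := Nat.dvd_gcd ⟨r i, by rw [← hmul i]; ring⟩ hdvd
        have hgpos : 0 < Nat.gcd N n := Nat.gcd_pos_of_pos_left n hNpos
        simp only [hS, Finset.mem_biUnion, Finset.mem_image, Finset.mem_univ, true_and]
        refine ⟨r i, ⟨i, rfl⟩, Nat.mem_divisors.mpr ⟨?_, hrne i⟩⟩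
        -- N / gcd ∣ r i  since d i ∣ gcd
        obtain ⟨c, hc⟩ := hdg
        refine ⟨c, ?_⟩
        have h2 : N = N / Nat.gcd N n * Nat.gcd N n := (Nat.div_mul_cancel hg).symm
        have h3 : r i * d i = N / Nat.gcd N n * c * d i := by
          rw [hmul i]
          calc N = N / Nat.gcd N n * Nat.gcd N n := h2
            _ = N / Nat.gcd N n * (d i * c) := by rw [hc]
            _ = N / Nat.gcd N n * c * d i := by ring
        exact Nat.eq_of_mul_eq_mul_right (Nat.pos_of_ne_zero (hdne i)) h3
      · have hgpos : 0 < Nat.gcd N n := Nat.gcd_pos_of_pos_left n hNpos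
        rw [Nat.div_div_self (Nat.gcd_dvd_left N n) hH]
    · rintro ⟨m, hm, hn, hgcd⟩
      refine ⟨hn, ?_⟩
      simp only [hS, Finset.mem_biUnion, Finset.mem_image, Finset.mem_univ, true_and] at hm
      obtain ⟨x, ⟨i, rfl⟩, hx⟩ := hm
      have hmr : m ∣ r i := (Nat.mem_divisors.mp hx).1
      have hmpos : 0 < m := Nat.pos_of_mem_divisors hx
      refine ⟨i, ?_⟩
      have h1 : d i ∣ N / m := by
        obtain ⟨c, hc⟩ := hmr
        refine ⟨c, ?_⟩
        rw [← hmul i, hc]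
        rw [show m * c * d i = m * (d i * c) by ring, Nat.mul_div_cancel_left _ hmpos]
      calc d i ∣ N / m := h1
        _ = Nat.gcd N n := hgcd.symm
        _ ∣ n := Nat.gcd_dvd_right N n
  rw [hset, Finset.card_biUnion]
  · apply Finset.sum_congr rfl
    intro m hm
    have hmN : m ∣ N := hSdvd m hm
    have hmpos : 0 < m := by
      simp only [hS, Finset.mem_biUnion] at hm
      obtain ⟨x, _, hx⟩ := hm
      exact Nat.pos_of_mem_divisors hx
    have := Nat.totient_div_of_dvd (Nat.div_dvd_of_dvd hmN)
    rw [Nat.div_div_self hmN hH] at this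
    exact this
  · intro m hm m' hm' hne
    simp only [Finset.disjoint_left, Finset.mem_filter, Finset.mem_range]
    rintro n ⟨_, h1⟩ ⟨_, h2⟩
    apply hne
    have hmN := hSdvd m hm
    have hm'N := hSdvd m' hm'
    have : N / m = N / m' := h1 ▸ h2
    have := congrArg (N / ·) this
    simpa [Nat.div_div_self hmN hH, Nat.div_div_self hm'N hH] using this
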